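/- Let β = (n₁, ..., n_r) and γ = (m₁, ..., m_s) be compositions of n. The number of elements of W^{β,γ} (permutations w of [1,n] increasing on each block of β with w⁻¹ increasing on each block of γ) equals the number of r×s non-negative integer matrices with row sums n₁, ..., n_r and column sums m₁, ..., m_s. In particular, if β = γ = (1, 1, ..., 1), this number is n!. -/

import Mathlib

/-- The offset of the `i`-th block of the composition `β`. -/
def offsetOf {r : ℕ} (β : Fin r → ℕ) (i : Fin r) : ℕ :=
  ∑ j ∈ Finset.univ.filter (fun j => j < i), β j

/-- The `i`-th block of the composition `β` of `n`, as a subset of `Fin n`. -/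
def blockOf (n : ℕ) {r : ℕ} (β : Fin r → ℕ) (i : Fin r) : Set (Fin n) :=
  {k | offsetOf β i ≤ (k : ℕ) ∧ (k : ℕ) < offsetOf β i + β i}

/-- `f` is increasing on the set `S`. -/
def IncOn {n : ℕ} (f : Fin n → Fin n) (S : Set (Fin n)) : Prop :=
  ∀ x ∈ S, ∀ y ∈ S, x < y → f x < f y

open Finset

lemma offset_le_sum {q : ℕ} (m : Fin q → ℕ) (i : Fin q) :
    ∑ t ∈ univ.filter (fun t => t ≤ i), m t = offsetOf m i + m i := by
  have h : univ.filter (fun t : Fin q => t ≤ i)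
      = insert i (univ.filter (fun t => t < i)) := by
    ext t
    simp [le_iff_lt_or_eq, or_comm, eq_comm]
  rw [h, Finset.sum_insert (by simp), offsetOf, add_comm]

lemma offset_add_le {q : ℕ} (m : Fin q → ℕ) {i j : Fin q} (h : i < j) :
    offsetOf m i + m i ≤ offsetOf m j := by
  rw [← offset_le_sum]
  apply Finset.sum_le_sum_of_subset
  intro t ht
  simp only [mem_filter, mem_univ, true_and] at ht ⊢
  exact lt_of_le_of_lt ht h

lemma offset_add_le_total {q : ℕ} (m : Fin q → ℕ) (i : Fin q) :
    offsetOf m i + m i ≤ ∑ t, m t := by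
  rw [← offset_le_sum]
  exact Finset.sum_le_sum_of_subset (fun t _ => mem_univ t)

lemma pick_aux {q : ℕ} (m : Fin q → ℕ) {t : ℕ} (ht : t < ∑ i, m i) :
    ∃! j, offsetOf m j ≤ t ∧ t < offsetOf m j + m j := by
  have hq : q ≠ 0 := by
    rintro rfl; simp at ht
  set F := univ.filter (fun j : Fin q => offsetOf m j ≤ t) with hF
  have h0 : (⟨0, Nat.pos_of_ne_zero hq⟩ : Fin q) ∈ F := by
    have : offsetOf m (⟨0, Nat.pos_of_ne_zero hq⟩ : Fin q) = 0 := by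
      rw [offsetOf]
      apply Finset.sum_eq_zero
      intro x hx
      simp only [mem_filter, mem_univ, true_and] at hx
      exact absurd hx (by simp [Fin.lt_def])
    simp [hF, this]
  have hFne : F.Nonempty := ⟨_, h0⟩
  set j := F.max' hFne with hj
  have hjF : j ∈ F := F.max'_mem hFne
  have hjle : offsetOf m j ≤ t := by
    simpa [hF] using hjF
  have hjlt : t < offsetOf m j + m j := by
    by_contra hcon
    push_neg at hcon
    by_cases hlast : j.val + 1 < q
    · have hmem : (⟨j.val + 1, hlast⟩ : Fin q) ∈ F := by
        have hoff : offsetOf m (⟨j.val + 1, hlast⟩ : Fin q) = offsetOf m j + m j := by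
          rw [← offset_le_sum]
          apply Finset.sum_congr _ (fun x _ => rfl)
          ext x
          simp only [mem_filter, mem_univ, true_and, Fin.lt_def, Fin.le_def]
          omega
        simp only [hF, mem_filter, mem_univ, true_and, hoff]
        exact hcon
      have hle := F.le_max' _ hmem
      rw [← hj] at hle
      have : j.val + 1 ≤ j.val := Fin.le_def.mp hle
      omega
    · have hq2 : j.val + 1 = q := le_antisymm j.isLt (not_lt.mp hlast)
      have : ∑ i, m i = offsetOf m j + m j := by
        rw [← offset_le_sum]
        apply Finset.sum_congr _ (fun x _ => rfl)
        ext x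
        simp only [mem_univ, mem_filter, true_and, true_iff, Fin.le_def]
        have hx := x.isLt
        omega
      omega
  refine ⟨j, ⟨hjle, hjlt⟩, ?_⟩
  rintro j' ⟨h1, h2⟩
  by_contra hne
  rcases lt_or_gt_of_ne hne with h | h
  · have := offset_add_le m h
    omega
  · have := offset_add_le m h
    omega

/-- The index of the block (w.r.t. composition `m`) containing position `t`. -/
noncomputable def pick {q : ℕ} (m : Fin q → ℕ) (t : ℕ) (ht : t < ∑ i, m i) : Fin q :=
  (pick_aux m ht).choose

lemma pick_spec {q : ℕ} (m : Fin q → ℕ) (t : ℕ) (ht : t < ∑ i, m i) :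
    offsetOf m (pick m t ht) ≤ t ∧ t < offsetOf m (pick m t ht) + m (pick m t ht) :=
  (pick_aux m ht).choose_spec.1

lemma pick_unique {q : ℕ} (m : Fin q → ℕ) (t : ℕ) (ht : t < ∑ i, m i) {j : Fin q}
    (h : offsetOf m j ≤ t ∧ t < offsetOf m j + m j) : pick m t ht = j :=
  ((pick_aux m ht).choose_spec.2 j h).symm

lemma pick_mono {q : ℕ} (m : Fin q → ℕ) {t t' : ℕ} (ht : t < ∑ i, m i)
    (ht' : t' < ∑ i, m i) (h : t ≤ t') : pick m t ht ≤ pick m t' ht' := by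
  by_contra hcon
  push_neg at hcon
  have h1 := pick_spec m t ht
  have h2 := pick_spec m t' ht'
  have := offset_add_le m hcon
  omega

lemma card_interval (n a b : ℕ) (hb : b ≤ n) :
    (Finset.univ.filter (fun k : Fin n => a ≤ k.val ∧ k.val < b)).card = b - a := by
  rw [← Nat.card_Ico a b]
  apply Finset.card_bij (fun k _ => k.val)
  · intro k hk
    simp only [mem_filter, mem_univ, true_and] at hk
    simp [Finset.mem_Ico, hk.1, hk.2]
  · intro k _ k' _ h
    exact Fin.val_injective h
  · intro u hu
    simp only [Finset.mem_Ico] at hu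
    exact ⟨⟨u, lt_of_lt_of_le hu.2 hb⟩, by simp [hu.1, hu.2], rfl⟩

lemma mem_block_iff {n q : ℕ} (m : Fin q → ℕ) (hm : ∑ i, m i = n) (k : Fin n) (i : Fin q) :
    k ∈ blockOf n m i ↔ pick m k.val (by omega) = i := by
  constructor
  · intro hk
    exact pick_unique m k.val _ hk
  · intro hk
    have := pick_spec m k.val (by omega)
    rw [hk] at this
    exact this

/-- The `i`-th block as a `Finset`. -/
def blockFS (n : ℕ) {q : ℕ} (m : Fin q → ℕ) (i : Fin q) : Finset (Fin n) :=
  Finset.univ.filter (fun k : Fin n => offsetOf m i ≤ k.val ∧ k.val < offsetOf m i + m i)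

lemma mem_blockFS {n q : ℕ} (m : Fin q → ℕ) (i : Fin q) (k : Fin n) :
    k ∈ blockFS n m i ↔ k ∈ blockOf n m i := by
  simp [blockFS, blockOf, Set.mem_setOf_eq]

lemma card_block {n q : ℕ} (m : Fin q → ℕ) (hm : ∑ i, m i = n) (i : Fin q) :
    (blockFS n m i).card = m i := by
  rw [blockFS, card_interval n _ _ (by have := offset_add_le_total m i; omega)]
  omega

/-- The index of the block containing `k : Fin n`. -/
noncomputable def idx {n q : ℕ} (m : Fin q → ℕ) (hm : ∑ i, m i = n) (k : Fin n) : Fin q :=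
  pick m k.val (by have := k.isLt; omega)

lemma idx_spec {n q : ℕ} (m : Fin q → ℕ) (hm : ∑ i, m i = n) (k : Fin n) :
    k ∈ blockOf n m (idx m hm k) := by
  have := pick_spec m k.val (show k.val < ∑ i, m i by have := k.isLt; omega)
  exact this

lemma idx_eq_of_mem {n q : ℕ} (m : Fin q → ℕ) (hm : ∑ i, m i = n) {k : Fin n} {i : Fin q}
    (h : k ∈ blockOf n m i) : idx m hm k = i :=
  pick_unique m k.val _ h

lemma idx_mono {n q : ℕ} (m : Fin q → ℕ) (hm : ∑ i, m i = n) {k k' : Fin n}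
    (h : k ≤ k') : idx m hm k ≤ idx m hm k' :=
  pick_mono m _ _ h

/-- The set of colorings corresponding to `W^{β,γ}`. -/
def colorSet (n : ℕ) {r s : ℕ} (β : Fin r → ℕ) (γ : Fin s → ℕ) : Set (Fin n → Fin s) :=
  {c | (∀ j, (Finset.univ.filter (fun k => c k = j)).card = γ j) ∧
    ∀ i, ∀ x ∈ blockOf n β i, ∀ y ∈ blockOf n β i, x ≤ y → c x ≤ c y}

/-- The rank of `x` within its color fiber. -/
def rnk {n s : ℕ} (c : Fin n → Fin s) (x : Fin n) : ℕ :=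
  (Finset.univ.filter (fun y => y < x ∧ c y = c x)).card

lemma rnk_lt_rnk {n s : ℕ} {c : Fin n → Fin s} {x y : Fin n}
    (hxy : x < y) (hcc : c x = c y) : rnk c x < rnk c y := by
  apply Finset.card_lt_card
  constructor
  · intro z hz
    simp only [mem_filter, mem_univ, true_and] at hz ⊢
    exact ⟨lt_trans hz.1 hxy, hz.2.trans hcc⟩
  · intro hsub
    have hx : x ∈ Finset.univ.filter (fun z => z < y ∧ c z = c y) := by
      simp [hxy, hcc]
    have := hsub hx
    simp only [mem_filter, mem_univ, true_and] at this
    exact lt_irrefl x this.1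

lemma rnk_lt {n s : ℕ} {γ : Fin s → ℕ} {c : Fin n → Fin s}
    (hfib : ∀ j, (Finset.univ.filter (fun k => c k = j)).card = γ j) (x : Fin n) :
    rnk c x < γ (c x) := by
  rw [← hfib (c x)]
  apply Finset.card_lt_card
  constructor
  · intro z hz
    simp only [mem_filter, mem_univ, true_and] at hz ⊢
    exact hz.2
  · intro hsub
    have hx : x ∈ Finset.univ.filter (fun k => c k = c x) := by simp
    have := hsub hx
    simp only [mem_filter, mem_univ, true_and] at this
    exact lt_irrefl x this.1

/-- Value formula: a permutation whose inverse is increasing on the γ-blocks is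
determined by its coloring. -/
lemma val_formula {n s : ℕ} (γ : Fin s → ℕ) (hγ : ∑ j, γ j = n)
    (w : Equiv.Perm (Fin n)) (hw : ∀ j, IncOn w.symm (blockOf n γ j)) (x : Fin n) :
    (w x).val = offsetOf γ (idx γ hγ (w x)) +
      (Finset.univ.filter (fun y => y < x ∧ idx γ hγ (w y) = idx γ hγ (w x))).card := by
  set j := idx γ hγ (w x) with hj
  have hwxj : w x ∈ blockOf n γ j := idx_spec γ hγ (w x)
  have hcard : (Finset.univ.filter (fun y => y < x ∧ idx γ hγ (w y) = j)).card
      = (Finset.univ.filter (fun u : Fin n => offsetOf γ j ≤ u.val ∧ u.val < (w x).val)).card := by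
    apply Finset.card_bij (fun y _ => w y)
    · intro y hy
      simp only [mem_filter, mem_univ, true_and] at hy
      have hwyj : w y ∈ blockOf n γ j := hy.2 ▸ idx_spec γ hγ (w y)
      simp only [mem_filter, mem_univ, true_and]
      refine ⟨hwyj.1, ?_⟩
      rcases lt_trichotomy (w y) (w x) with h | h | h
      · exact h
      · exact absurd (w.injective h) (ne_of_lt hy.1)
      · have := hw j (w x) hwxj (w y) hwyj h
        simp only [Equiv.symm_apply_apply] at this
        exact absurd this (not_lt.mpr (le_of_lt hy.1))
    · intro y _ y' _ h
      exact w.injective h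
    · intro u hu
      simp only [mem_filter, mem_univ, true_and] at hu
      have huj : u ∈ blockOf n γ j := ⟨hu.1, lt_of_lt_of_le hu.2 (le_of_lt hwxj.2)⟩
      refine ⟨w.symm u, ?_, by simp⟩
      simp only [mem_filter, mem_univ, true_and]
      constructor
      · have := hw j u huj (w x) hwxj (by exact hu.2)
        simpa using this
      · rw [show w (w.symm u) = u by simp]
        exact idx_eq_of_mem γ hγ huj
  rw [hcard, card_interval n _ _ (le_of_lt (w x).isLt)]
  have := hwxj.1
  omega

section construct
variable {n s : ℕ} {γ : Fin s → ℕ}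

/-- Build the permutation from a coloring. -/
noncomputable def buildFun (hγ : ∑ j, γ j = n) (c : Fin n → Fin s)
    (hfib : ∀ j, (Finset.univ.filter (fun k => c k = j)).card = γ j) (x : Fin n) : Fin n :=
  ⟨offsetOf γ (c x) + rnk c x, by
    have h1 := rnk_lt hfib x
    have h2 := offset_add_le_total γ (c x)
    omega⟩

lemma buildFun_mem (hγ : ∑ j, γ j = n) (c : Fin n → Fin s)
    (hfib : ∀ j, (Finset.univ.filter (fun k => c k = j)).card = γ j) (x : Fin n) :
    buildFun hγ c hfib x ∈ blockOf n γ (c x) := by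
  constructor
  · simp [buildFun]
  · simp only [buildFun]
    have := rnk_lt hfib x
    omega

lemma buildFun_idx (hγ : ∑ j, γ j = n) (c : Fin n → Fin s)
    (hfib : ∀ j, (Finset.univ.filter (fun k => c k = j)).card = γ j) (x : Fin n) :
    idx γ hγ (buildFun hγ c hfib x) = c x :=
  idx_eq_of_mem γ hγ (buildFun_mem hγ c hfib x)

lemma buildFun_inj (hγ : ∑ j, γ j = n) (c : Fin n → Fin s)
    (hfib : ∀ j, (Finset.univ.filter (fun k => c k = j)).card = γ j) :
    Function.Injective (buildFun hγ c hfib) := by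
  intro x y h
  have hc : c x = c y := by
    have h1 := buildFun_idx hγ c hfib x
    have h2 := buildFun_idx hγ c hfib y
    rw [← h1, ← h2, h]
  have hv : (buildFun hγ c hfib x).val = (buildFun hγ c hfib y).val := by rw [h]
  simp only [buildFun, hc] at hv
  have hr : rnk c x = rnk c y := by omega
  rcases lt_trichotomy x y with hxy | hxy | hxy
  · exact absurd (rnk_lt_rnk hxy hc) (by omega)
  · exact hxy
  · exact absurd (rnk_lt_rnk hxy hc.symm) (by omega)

/-- The permutation built from a coloring. -/
noncomputable def buildPerm (hγ : ∑ j, γ j = n) (c : Fin n → Fin s)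
    (hfib : ∀ j, (Finset.univ.filter (fun k => c k = j)).card = γ j) : Equiv.Perm (Fin n) :=
  Equiv.ofBijective _ (Finite.injective_iff_bijective.mp (buildFun_inj hγ c hfib))

lemma buildPerm_apply (hγ : ∑ j, γ j = n) (c : Fin n → Fin s)
    (hfib : ∀ j, (Finset.univ.filter (fun k => c k = j)).card = γ j) (x : Fin n) :
    buildPerm hγ c hfib x = buildFun hγ c hfib x := rfl

lemma buildPerm_symm_inc (hγ : ∑ j, γ j = n) (c : Fin n → Fin s)
    (hfib : ∀ j, (Finset.univ.filter (fun k => c k = j)).card = γ j) (j : Fin s) :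
    IncOn (buildPerm hγ c hfib).symm (blockOf n γ j) := by
  intro u hu v hv huv
  set w := buildPerm hγ c hfib with hwdef
  set x := w.symm u with hx
  set y := w.symm v with hy
  have hgx : buildFun hγ c hfib x = u := by
    rw [← buildPerm_apply hγ c hfib, hx, Equiv.apply_symm_apply]
  have hgy : buildFun hγ c hfib y = v := by
    rw [← buildPerm_apply hγ c hfib, hy, Equiv.apply_symm_apply]
  have hcx : c x = j := by
    rw [← buildFun_idx hγ c hfib x, hgx]
    exact idx_eq_of_mem γ hγ hu
  have hcy : c y = j := by
    rw [← buildFun_idx hγ c hfib y, hgy]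
    exact idx_eq_of_mem γ hγ hv
  have hux : u.val = offsetOf γ j + rnk c x := by rw [← hgx]; simp [buildFun, hcx]
  have hvy : v.val = offsetOf γ j + rnk c y := by rw [← hgy]; simp [buildFun, hcy]
  have hr : rnk c x < rnk c y := by
    have : u.val < v.val := huv
    omega
  rcases lt_trichotomy x y with hxy | hxy | hxy
  · exact hxy
  · rw [hxy] at hgx; rw [hgx] at hgy; exact absurd hgy (ne_of_lt huv)
  · exact absurd (rnk_lt_rnk hxy (hcy.trans hcx.symm)) (by omega)

lemma buildPerm_inc {r : ℕ} {β : Fin r → ℕ} (hγ : ∑ j, γ j = n) (c : Fin n → Fin s)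
    (hfib : ∀ j, (Finset.univ.filter (fun k => c k = j)).card = γ j)
    (hmono : ∀ i, ∀ x ∈ blockOf n β i, ∀ y ∈ blockOf n β i, x ≤ y → c x ≤ c y)
    (i : Fin r) : IncOn (buildPerm hγ c hfib) (blockOf n β i) := by
  intro x hx y hy hxy
  have hc : c x ≤ c y := hmono i x hx y hy (le_of_lt hxy)
  rw [buildPerm_apply, buildPerm_apply]
  show (buildFun hγ c hfib x).val < (buildFun hγ c hfib y).val
  rcases lt_or_eq_of_le hc with hlt | heq
  · have h1 : (buildFun hγ c hfib x).val < offsetOf γ (c x) + γ (c x) :=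
      (buildFun_mem hγ c hfib x).2
    have h2 := offset_add_le γ hlt
    have h3 : offsetOf γ (c y) ≤ (buildFun hγ c hfib y).val :=
      (buildFun_mem hγ c hfib y).1
    omega
  · have hr := rnk_lt_rnk hxy heq
    simp only [buildFun, heq]
    omega

end construct

lemma coloring_fib {n s : ℕ} (γ : Fin s → ℕ) (hγ : ∑ j, γ j = n)
    (w : Equiv.Perm (Fin n)) (j : Fin s) :
    (Finset.univ.filter (fun k => idx γ hγ (w k) = j)).card = γ j := by
  rw [← card_block γ hγ j]
  apply Finset.card_bij (fun k _ => w k)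
  · intro k hk
    simp only [mem_filter, mem_univ, true_and] at hk
    rw [mem_blockFS]
    exact hk ▸ idx_spec γ hγ (w k)
  · intro a _ b _ h
    exact w.injective h
  · intro u hu
    rw [mem_blockFS] at hu
    refine ⟨w.symm u, ?_, by simp⟩
    simp only [mem_filter, mem_univ, true_and]
    rw [show w (w.symm u) = u by simp]
    exact idx_eq_of_mem γ hγ hu

lemma stepA (n r s : ℕ) (β : Fin r → ℕ) (γ : Fin s → ℕ)
    (hβ : ∑ i, β i = n) (hγ : ∑ j, γ j = n) :
    {w : Equiv.Perm (Fin n) |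
        (∀ i, IncOn w (blockOf n β i)) ∧ ∀ j, IncOn w.symm (blockOf n γ j)}.ncard
      = (colorSet n β γ).ncard := by
  rw [← Nat.card_coe_set_eq, ← Nat.card_coe_set_eq]
  apply Nat.card_congr
  refine Equiv.ofBijective
    (fun w => ⟨fun k => idx γ hγ (w.val k), coloring_fib γ hγ w.val, ?_⟩) ⟨?_, ?_⟩
  · -- monotone on β-blocks
    intro i x hx y hy hxy
    rcases lt_or_eq_of_le hxy with hlt | heq
    · exact idx_mono γ hγ (le_of_lt (w.2.1 i x hx y hy hlt))
    · rw [heq]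
  · -- injective
    rintro ⟨w, hw⟩ ⟨w', hw'⟩ h
    have h := congrArg Subtype.val h; dsimp only at h
    apply Subtype.ext
    apply Equiv.ext
    intro x
    apply Fin.val_injective
    have h1 := val_formula γ hγ w hw.2 x
    have h2 := val_formula γ hγ w' hw'.2 x
    have hcx : idx γ hγ (w x) = idx γ hγ (w' x) := congrFun h x
    rw [h1, h2, hcx]
    congr 1
    apply Finset.card_bij (fun y _ => y) _ (fun a b _ _ h => h) (fun b hb => ⟨b, by
      simp only [mem_filter, mem_univ, true_and] at hb ⊢
      exact ⟨hb.1, (congrFun h b) ▸ hb.2⟩, rfl⟩)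
    intro a ha
    simp only [mem_filter, mem_univ, true_and] at ha ⊢
    exact ⟨ha.1, (congrFun h a).symm ▸ (hcx ▸ ha.2)⟩
  · -- surjective
    rintro ⟨c, hfib, hmono⟩
    refine ⟨⟨buildPerm hγ c hfib, ?_, ?_⟩, ?_⟩
    · exact buildPerm_inc hγ c hfib hmono
    · exact buildPerm_symm_inc hγ c hfib
    · apply Subtype.ext
      funext k
      exact buildFun_idx hγ c hfib k

/-- The set of contingency tables. -/
def matSet (n r s : ℕ) (β : Fin r → ℕ) (γ : Fin s → ℕ) : Set (Fin r → Fin s → ℕ) :=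
  {B | (∀ i, ∑ j, B i j = β i) ∧ ∀ j, ∑ i, B i j = γ j}

/-- The counting matrix of a coloring. -/
def cnt {n r s : ℕ} (β : Fin r → ℕ) (c : Fin n → Fin s) (i : Fin r) (j : Fin s) : ℕ :=
  ((blockFS n β i).filter (fun k => c k = j)).card

lemma cnt_row {n r s : ℕ} (β : Fin r → ℕ) (hβ : ∑ i, β i = n) (c : Fin n → Fin s)
    (i : Fin r) : ∑ j, cnt β c i j = β i := by
  rw [← card_block β hβ i]
  exact (Finset.card_eq_sum_card_fiberwise (fun x _ => mem_univ (c x))).symm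

lemma cnt_col {n r s : ℕ} (β : Fin r → ℕ) (hβ : ∑ i, β i = n) (c : Fin n → Fin s)
    (j : Fin s) :
    ∑ i, cnt β c i j = (Finset.univ.filter (fun k => c k = j)).card := by
  rw [Finset.card_eq_sum_card_fiberwise
    (f := fun k => idx β hβ k) (t := Finset.univ) (fun x _ => mem_univ _)]
  apply Finset.sum_congr rfl
  intro i _
  rw [cnt]
  congr 1
  ext k
  simp only [mem_filter, mem_univ, true_and, mem_blockFS]
  constructor
  · rintro ⟨h1, h2⟩
    exact ⟨h2, idx_eq_of_mem β hβ h1⟩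
  · rintro ⟨h1, h2⟩
    rw [← h2]
    exact ⟨idx_spec β hβ k, h1⟩

/-- Count of elements of a block with color `< j`, for a coloring monotone on the block. -/
lemma cnt_lt_eq {n r s : ℕ} (β : Fin r → ℕ) (c : Fin n → Fin s) (i : Fin r) (j : Fin s) :
    ((blockFS n β i).filter (fun k => c k < j)).card
      = ∑ j' ∈ Finset.univ.filter (fun j' => j' < j), cnt β c i j' := by
  rw [Finset.card_eq_sum_card_fiberwise (f := c)
    (t := Finset.univ.filter (fun j' => j' < j)) (fun x hx => by
      simp only [mem_coe, mem_filter, mem_univ, true_and] at hx ⊢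
      exact hx.2)]
  apply Finset.sum_congr rfl
  intro j' hj'
  simp only [mem_filter, mem_univ, true_and] at hj'
  rw [cnt, Finset.filter_filter]
  congr 1
  ext k
  simp only [mem_filter]
  constructor
  · rintro ⟨h1, _, h3⟩
    exact ⟨h1, h3⟩
  · rintro ⟨h1, h2⟩
    exact ⟨h1, h2 ▸ hj', h2⟩

lemma rank_lt_iff {n r s : ℕ} (β : Fin r → ℕ) (hβ : ∑ i, β i = n) (c : Fin n → Fin s)
    (i : Fin r) (hmono : ∀ x ∈ blockOf n β i, ∀ y ∈ blockOf n β i, x ≤ y → c x ≤ c y)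
    {k : Fin n} (hk : k ∈ blockOf n β i) (j : Fin s) :
    c k < j ↔ k.val - offsetOf β i < ((blockFS n β i).filter (fun k' => c k' < j)).card := by
  have hkn := k.isLt
  constructor
  · intro hlt
    have hsub : Finset.univ.filter (fun k' : Fin n =>
          offsetOf β i ≤ k'.val ∧ k'.val < k.val + 1)
        ⊆ (blockFS n β i).filter (fun k' => c k' < j) := by
      intro k' hk'
      simp only [mem_filter, mem_univ, true_and, mem_blockFS] at hk' ⊢
      have hk'mem : k' ∈ blockOf n β i := ⟨hk'.1, by have := hk.2; omega⟩
      refine ⟨hk'mem, lt_of_le_of_lt (hmono k' hk'mem k hk ?_) hlt⟩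
      exact Fin.le_def.mpr (by omega)
    have hcard := Finset.card_le_card hsub
    rw [card_interval n _ _ (by omega)] at hcard
    have := hk.1
    omega
  · intro hcard
    by_contra hcon
    push_neg at hcon
    have hsub : (blockFS n β i).filter (fun k' => c k' < j)
        ⊆ Finset.univ.filter (fun k' : Fin n =>
          offsetOf β i ≤ k'.val ∧ k'.val < k.val) := by
      intro k' hk'
      simp only [mem_filter, mem_univ, true_and, mem_blockFS] at hk' ⊢
      refine ⟨hk'.1.1, ?_⟩
      rcases lt_trichotomy k' k with h | h | h
      · exact h
      · rw [h] at hk'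
        exact absurd hk'.2 (not_lt.mpr hcon)
      · have := hmono k hk k' hk'.1 (le_of_lt h)
        exact absurd (lt_of_le_of_lt this hk'.2) (not_lt.mpr hcon)
    have := Finset.card_le_card hsub
    rw [card_interval n _ _ (by omega)] at this
    omega

lemma color_eq_of_cnt_eq {n r s : ℕ} {β : Fin r → ℕ} {γ : Fin s → ℕ}
    (hβ : ∑ i, β i = n) {c c' : Fin n → Fin s}
    (hc : c ∈ colorSet n β γ) (hc' : c' ∈ colorSet n β γ)
    (h : cnt β c = cnt β c') : c = c' := by
  funext k
  set i := idx β hβ k with hi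
  have hk : k ∈ blockOf n β i := idx_spec β hβ k
  have key : ∀ j, (c k < j ↔ c' k < j) := by
    intro j
    rw [rank_lt_iff β hβ c i (hc.2 i) hk j, rank_lt_iff β hβ c' i (hc'.2 i) hk j,
      cnt_lt_eq, cnt_lt_eq, h]
  rcases lt_trichotomy (c k) (c' k) with hlt | heq | hlt
  · exact absurd ((key (c' k)).mp hlt) (lt_irrefl _)
  · exact heq
  · exact absurd ((key (c k)).mpr hlt) (lt_irrefl _)

section matcolor
variable {n r s : ℕ} {β : Fin r → ℕ}

/-- The coloring constructed from a contingency table. -/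
noncomputable def matColor (hβ : ∑ i, β i = n) (B : Fin r → Fin s → ℕ)
    (hrow : ∀ i, ∑ j, B i j = β i) (k : Fin n) : Fin s :=
  pick (B (idx β hβ k)) (k.val - offsetOf β (idx β hβ k)) (by
    have h1 := (idx_spec β hβ k).1
    have h2 := (idx_spec β hβ k).2
    have h3 := hrow (idx β hβ k)
    omega)

lemma matColor_iff (hβ : ∑ i, β i = n) (B : Fin r → Fin s → ℕ)
    (hrow : ∀ i, ∑ j, B i j = β i) (k : Fin n) (i : Fin r) (j : Fin s) :
    (k ∈ blockOf n β i ∧ matColor hβ B hrow k = j) ↔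
      (offsetOf β i + offsetOf (B i) j ≤ k.val ∧
        k.val < offsetOf β i + offsetOf (B i) j + B i j) := by
  constructor
  · rintro ⟨hk, hcol⟩
    have hik : idx β hβ k = i := idx_eq_of_mem β hβ hk
    have hspec := pick_spec (B (idx β hβ k)) (k.val - offsetOf β (idx β hβ k)) (by
      have h1 := (idx_spec β hβ k).1
      have h2 := (idx_spec β hβ k).2
      have h3 := hrow (idx β hβ k)
      omega)
    rw [show pick (B (idx β hβ k)) (k.val - offsetOf β (idx β hβ k)) _
      = matColor hβ B hrow k from rfl, hcol] at hspec
    rw [hik] at hspec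
    have h1 := hk.1
    constructor <;> omega
  · rintro ⟨h1, h2⟩
    have hBij : offsetOf (B i) j + B i j ≤ β i := by
      have := offset_add_le_total (B i) j
      rw [hrow i] at this
      exact this
    have hk : k ∈ blockOf n β i := ⟨by omega, by omega⟩
    have hik : idx β hβ k = i := idx_eq_of_mem β hβ hk
    refine ⟨hk, ?_⟩
    apply pick_unique
    rw [hik]
    have := hk.1
    constructor <;> omega

lemma matColor_cnt (hβ : ∑ i, β i = n) (B : Fin r → Fin s → ℕ)
    (hrow : ∀ i, ∑ j, B i j = β i) (i : Fin r) (j : Fin s) :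
    cnt β (matColor hβ B hrow) i j = B i j := by
  have hBij : offsetOf (B i) j + B i j ≤ β i := by
    have := offset_add_le_total (B i) j
    rw [hrow i] at this
    exact this
  have hn : offsetOf β i + offsetOf (B i) j + B i j ≤ n := by
    have := offset_add_le_total β i
    omega
  rw [cnt]
  have hset : (blockFS n β i).filter (fun k => matColor hβ B hrow k = j)
      = Finset.univ.filter (fun k : Fin n =>
          offsetOf β i + offsetOf (B i) j ≤ k.val ∧
          k.val < offsetOf β i + offsetOf (B i) j + B i j) := by
    ext k
    simp only [mem_filter, mem_univ, true_and, mem_blockFS]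
    exact matColor_iff hβ B hrow k i j
  rw [hset, card_interval n _ _ hn]
  omega

lemma matColor_mono (hβ : ∑ i, β i = n) (B : Fin r → Fin s → ℕ)
    (hrow : ∀ i, ∑ j, B i j = β i) (i : Fin r) :
    ∀ x ∈ blockOf n β i, ∀ y ∈ blockOf n β i, x ≤ y →
      matColor hβ B hrow x ≤ matColor hβ B hrow y := by
  intro x hx y hy hxy
  have hxint := (matColor_iff hβ B hrow x i (matColor hβ B hrow x)).mp ⟨hx, rfl⟩
  have hyint := (matColor_iff hβ B hrow y i (matColor hβ B hrow y)).mp ⟨hy, rfl⟩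
  by_contra hcon
  push_neg at hcon
  have hle := offset_add_le (B i) hcon
  have : x.val ≤ y.val := hxy
  omega

lemma matColor_fib {γ : Fin s → ℕ} (hβ : ∑ i, β i = n) (B : Fin r → Fin s → ℕ)
    (hrow : ∀ i, ∑ j, B i j = β i) (hcol : ∀ j, ∑ i, B i j = γ j) (j : Fin s) :
    (Finset.univ.filter (fun k => matColor hβ B hrow k = j)).card = γ j := by
  rw [← cnt_col β hβ, ← hcol j]
  apply Finset.sum_congr rfl
  intro i _
  exact matColor_cnt hβ B hrow i j

end matcolor

lemma stepB (n r s : ℕ) (β : Fin r → ℕ) (γ : Fin s → ℕ)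
    (hβ : ∑ i, β i = n) (hγ : ∑ j, γ j = n) :
    (colorSet n β γ).ncard = (matSet n r s β γ).ncard := by
  rw [← Nat.card_coe_set_eq, ← Nat.card_coe_set_eq]
  apply Nat.card_congr
  refine Equiv.ofBijective (fun c => ⟨cnt β c.val, ?_, ?_⟩) ⟨?_, ?_⟩
  · exact cnt_row β hβ c.val
  · intro j
    rw [cnt_col β hβ c.val j]
    exact c.2.1 j
  · rintro ⟨c, hc⟩ ⟨c', hc'⟩ h
    have h := congrArg Subtype.val h; dsimp only at h
    exact Subtype.ext (color_eq_of_cnt_eq hβ hc hc' h)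
  · rintro ⟨B, hrow, hcol⟩
    refine ⟨⟨matColor hβ B hrow, ?_, ?_⟩, ?_⟩
    · exact matColor_fib hβ B hrow hcol
    · exact matColor_mono hβ B hrow
    · apply Subtype.ext
      funext i j
      exact matColor_cnt hβ B hrow i j

theorem stmt9 (n r s : ℕ) (β : Fin r → ℕ) (γ : Fin s → ℕ)
    (hβ : ∑ i, β i = n) (hγ : ∑ j, γ j = n) :
    {w : Equiv.Perm (Fin n) |
        (∀ i, IncOn w (blockOf n β i)) ∧ ∀ j, IncOn w.symm (blockOf n γ j)}.ncard =
      {B : Fin r → Fin s → ℕ |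
        (∀ i, ∑ j, B i j = β i) ∧ ∀ j, ∑ i, B i j = γ j}.ncard ∧
    ∀ δ : Fin n → ℕ, (∀ i, δ i = 1) →
      {w : Equiv.Perm (Fin n) |
        (∀ i, IncOn w (blockOf n δ i)) ∧
          ∀ j, IncOn w.symm (blockOf n δ j)}.ncard = n.factorial := by
  constructor
  · exact (stepA n r s β γ hβ hγ).trans (stepB n r s β γ hβ hγ)
  · intro δ hδ
    have hblock : ∀ (i : Fin n) (f : Fin n → Fin n), IncOn f (blockOf n δ i) := by
      intro i f x hx y hy hxy
      exfalso
      have h1 := hx.1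
      have h2 := hx.2
      have h3 := hy.1
      have h4 := hy.2
      rw [hδ i] at h2 h4
      have : x.val < y.val := hxy
      omega
    have huniv : {w : Equiv.Perm (Fin n) |
        (∀ i, IncOn w (blockOf n δ i)) ∧
          ∀ j, IncOn w.symm (blockOf n δ j)} = Set.univ := by
      ext w
      simp only [Set.mem_setOf_eq, Set.mem_univ, iff_true]
      exact ⟨fun i => hblock i w, fun j => hblock j w.symm⟩
    rw [huniv, Set.ncard_univ, Nat.card_eq_fintype_card, Fintype.card_perm, Fintype.card_fin]
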